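/- The relation r is an equivalence relation on Y, the quotient map q : Y → X is a surjective local homeomorphism, X is compact, and X is locally Hausdorff, i.e., every point of X has an open neighborhood whose subspace topology is Hausdorff. -/

import Mathlib

/-- The space `Y ⊆ ℝ²` for the broken heart: the union of the five segments
`{(0,t) : 0 ≤ t < 2}`, `{(-t,t) : 0 ≤ t ≤ 2}`, `{(t,t) : 0 ≤ t ≤ 2}`,
`{(-2,t) : 0 < t ≤ 2}` and `{(2,t) : 0 < t ≤ 2}`, with the subspace topology. -/
def heartY : Set (ℝ × ℝ) :=
  ((fun t : ℝ => ((0 : ℝ), t)) '' Set.Ico 0 2) ∪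
  ((fun t : ℝ => (-t, t)) '' Set.Icc 0 2) ∪
  ((fun t : ℝ => (t, t)) '' Set.Icc 0 2) ∪
  ((fun t : ℝ => ((-2 : ℝ), t)) '' Set.Ioc 0 2) ∪
  ((fun t : ℝ => ((2 : ℝ), t)) '' Set.Ioc 0 2)

lemma mem_heartY_iff {p : ℝ × ℝ} : p ∈ heartY ↔
    (p.1 = 0 ∧ 0 ≤ p.2 ∧ p.2 < 2) ∨ (p.1 = -p.2 ∧ 0 ≤ p.2 ∧ p.2 ≤ 2) ∨
    (p.1 = p.2 ∧ 0 ≤ p.2 ∧ p.2 ≤ 2) ∨ (p.1 = -2 ∧ 0 < p.2 ∧ p.2 ≤ 2) ∨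
    (p.1 = 2 ∧ 0 < p.2 ∧ p.2 ≤ 2) := by
  obtain ⟨a, b⟩ := p
  simp only [heartY, Set.mem_union, Set.mem_image, Set.mem_Ico, Set.mem_Icc, Set.mem_Ioc,
    Prod.mk.injEq]
  constructor
  · rintro ((((⟨t, ht, h1, h2⟩ | ⟨t, ht, h1, h2⟩) | ⟨t, ht, h1, h2⟩) | ⟨t, ht, h1, h2⟩) |
      ⟨t, ht, h1, h2⟩) <;> subst h2 <;> simp_all <;> tauto
  · rintro (⟨h1, h2⟩ | ⟨h1, h2⟩ | ⟨h1, h2⟩ | ⟨h1, h2⟩ | ⟨h1, h2⟩)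
    · exact Or.inl (Or.inl (Or.inl (Or.inl ⟨b, h2, h1.symm ▸ rfl, rfl⟩)))
    · exact Or.inl (Or.inl (Or.inl (Or.inr ⟨b, h2, h1.symm ▸ rfl, rfl⟩)))
    · exact Or.inl (Or.inl (Or.inr ⟨b, h2, h1.symm ▸ rfl, rfl⟩))
    · exact Or.inl (Or.inr ⟨b, h2, h1.symm ▸ rfl, rfl⟩)
    · exact Or.inr ⟨b, h2, h1.symm ▸ rfl, rfl⟩

/-- The relation `r` on `Y`: `r w w'` iff `w = w'`, or there is `t ∈ (0,2)` such that
both `w` and `w'` belong to `{(0,t), (-2,t), (2,t)}`. -/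
def heartRel (w w' : heartY) : Prop :=
  w = w' ∨ ∃ t : ℝ, 0 < t ∧ t < 2 ∧
    (w : ℝ × ℝ) ∈ ({((0 : ℝ), t), ((-2 : ℝ), t), ((2 : ℝ), t)} : Set (ℝ × ℝ)) ∧
    (w' : ℝ × ℝ) ∈ ({((0 : ℝ), t), ((-2 : ℝ), t), ((2 : ℝ), t)} : Set (ℝ × ℝ))

lemma triple_snd {w : ℝ × ℝ} {t : ℝ}
    (h : w ∈ ({((0 : ℝ), t), ((-2 : ℝ), t), ((2 : ℝ), t)} : Set (ℝ × ℝ))) : w.2 = t := by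
  rcases h with h | h | h <;> subst h <;> rfl

lemma heartRel_equiv : Equivalence heartRel := by
  constructor
  · intro w; exact Or.inl rfl
  · rintro w w' (rfl | ⟨t, h1, h2, h3, h4⟩)
    · exact Or.inl rfl
    · exact Or.inr ⟨t, h1, h2, h4, h3⟩
  · rintro w w' w'' (rfl | ⟨t, h1, h2, h3, h4⟩) h'
    · exact h'
    · rcases h' with rfl | ⟨t', h1', h2', h3', h4'⟩
      · exact Or.inr ⟨t, h1, h2, h3, h4⟩
      · have : t = t' := by rw [← triple_snd h4, triple_snd h3']
        exact Or.inr ⟨t, h1, h2, h3, this ▸ h4'⟩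

lemma quotEq {u v : heartY} : Quot.mk heartRel u = Quot.mk heartRel v ↔ heartRel u v := by
  rw [Quot.eq, heartRel_equiv.eqvGen_iff]

lemma mem_triple_iff {w : ℝ × ℝ} {t : ℝ} :
    w ∈ ({((0 : ℝ), t), ((-2 : ℝ), t), ((2 : ℝ), t)} : Set (ℝ × ℝ)) ↔
      w = (0, t) ∨ w = (-2, t) ∨ w = (2, t) := by
  simp [Set.mem_insert_iff]

lemma mid_mem_heartY {t : ℝ} (h1 : 0 ≤ t) (h2 : t < 2) : ((0 : ℝ), t) ∈ heartY :=
  mem_heartY_iff.mpr (Or.inl ⟨rfl, h1, h2⟩)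

lemma left_mem_heartY {t : ℝ} (h1 : 0 < t) (h2 : t ≤ 2) : ((-2 : ℝ), t) ∈ heartY :=
  mem_heartY_iff.mpr (Or.inr (Or.inr (Or.inr (Or.inl ⟨rfl, h1, h2⟩))))

lemma right_mem_heartY {t : ℝ} (h1 : 0 < t) (h2 : t ≤ 2) : ((2 : ℝ), t) ∈ heartY :=
  mem_heartY_iff.mpr (Or.inr (Or.inr (Or.inr (Or.inr ⟨rfl, h1, h2⟩))))

/-- Y-points in the open middle strip. -/
lemma heartY_mid {p : ℝ × ℝ} (hp : p ∈ heartY) (h1 : |p.1| < p.2) (h2 : p.2 < 2) :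
    p.1 = 0 ∧ 0 < p.2 ∧ p.2 < 2 := by
  rcases mem_heartY_iff.mp hp with ⟨h, _, _⟩ | ⟨h, h3, _⟩ | ⟨h, h3, _⟩ | ⟨h, _, _⟩ | ⟨h, _, _⟩ <;>
    rw [h] at h1 <;> rw [abs_lt] at h1 <;>
    first
      | exact ⟨h, by linarith [h1.1, h1.2], h2⟩
      | (exfalso; linarith [h1.1, h1.2])

/-- Y-points in the open left strip. -/
lemma heartY_left {p : ℝ × ℝ} (hp : p ∈ heartY) (h1 : p.1 + p.2 < 0) (h2 : p.2 < 2) :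
    p.1 = -2 ∧ 0 < p.2 ∧ p.2 < 2 := by
  rcases mem_heartY_iff.mp hp with ⟨h, h3, _⟩ | ⟨h, h3, _⟩ | ⟨h, h3, _⟩ | ⟨h, h3, _⟩ |
    ⟨h, h3, _⟩ <;> rw [h] at h1 <;>
    first
      | exact ⟨h, h3, h2⟩
      | (exfalso; linarith)

/-- Y-points in the open right strip. -/
lemma heartY_right {p : ℝ × ℝ} (hp : p ∈ heartY) (h1 : p.2 < p.1) (h2 : p.2 < 2) :
    p.1 = 2 ∧ 0 < p.2 ∧ p.2 < 2 := by
  rcases mem_heartY_iff.mp hp with ⟨h, h3, _⟩ | ⟨h, h3, _⟩ | ⟨h, h3, _⟩ | ⟨h, h3, _⟩ |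
    ⟨h, h3, _⟩ <;> rw [h] at h1 <;>
    first
      | exact ⟨h, h3, h2⟩
      | (exfalso; linarith)

/-- shift of a planar set -/
def shiftSet (W : Set (ℝ × ℝ)) (a : ℝ) : Set (ℝ × ℝ) := {p | (p.1 + a, p.2) ∈ W}

lemma isOpen_shiftSet {W : Set (ℝ × ℝ)} (hW : IsOpen W) (a : ℝ) : IsOpen (shiftSet W a) :=
  hW.preimage (by fun_prop)

lemma isOpenMap_heartQuot : IsOpenMap (Quot.mk heartRel) := by
  intro U hU
  rw [← isQuotientMap_quot_mk.isOpen_preimage]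
  obtain ⟨W, hW, hWU⟩ := isOpen_induced_iff.mp hU
  have key : Quot.mk heartRel ⁻¹' (Quot.mk heartRel '' U) =
      U ∪ (Subtype.val ⁻¹' ({p : ℝ × ℝ | |p.1| < p.2 ∧ p.2 < 2} ∩
            (shiftSet W (-2) ∪ shiftSet W 2)))
        ∪ (Subtype.val ⁻¹' ({p : ℝ × ℝ | p.1 + p.2 < 0 ∧ p.2 < 2} ∩
            (shiftSet W 2 ∪ shiftSet W 4)))
        ∪ (Subtype.val ⁻¹' ({p : ℝ × ℝ | p.2 < p.1 ∧ p.2 < 2} ∩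
            (shiftSet W (-2) ∪ shiftSet W (-4)))) := by
    ext v
    simp only [Set.mem_preimage, Set.mem_image, Set.mem_union, Set.mem_inter_iff,
      Set.mem_setOf_eq]
    constructor
    · rintro ⟨u, hu, hq⟩
      have hr : heartRel u v := quotEq.mp hq
      have huW : (u : ℝ × ℝ) ∈ W := by rw [← hWU] at hu; exact hu
      rcases hr with rfl | ⟨t, ht0, ht2, hu3, hv3⟩
      · exact Or.inl (Or.inl (Or.inl hu))
      rcases mem_triple_iff.mp hv3 with hv | hv | hv <;>
        rcases mem_triple_iff.mp hu3 with hu' | hu' | hu'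
      · exact Or.inl (Or.inl (Or.inl (by rwa [(Subtype.ext (hu'.trans hv.symm) : u = v)] at hu)))
      · refine Or.inl (Or.inl (Or.inr ⟨⟨?_, ?_⟩, Or.inl ?_⟩)) <;>
          simp only [hv, shiftSet, Set.mem_setOf_eq] <;>
          first
            | simpa using ht0
            | exact ht2
            | (show ((0:ℝ) + -2, t) ∈ W; rw [hu'] at huW; convert huW using 2; ring)
      · refine Or.inl (Or.inl (Or.inr ⟨⟨?_, ?_⟩, Or.inr ?_⟩)) <;>
          simp only [hv, shiftSet, Set.mem_setOf_eq] <;>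
          first
            | simpa using ht0
            | exact ht2
            | (show ((0:ℝ) + 2, t) ∈ W; rw [hu'] at huW; convert huW using 2; ring)
      · refine Or.inl (Or.inr ⟨⟨?_, ?_⟩, Or.inl ?_⟩) <;>
          simp only [hv, shiftSet, Set.mem_setOf_eq] <;>
          first
            | linarith
            | exact ht2
            | (show ((-2:ℝ) + 2, t) ∈ W; rw [hu'] at huW; convert huW using 2; ring)
      · exact Or.inl (Or.inl (Or.inl (by rwa [(Subtype.ext (hu'.trans hv.symm) : u = v)] at hu)))
      · refine Or.inl (Or.inr ⟨⟨?_, ?_⟩, Or.inr ?_⟩) <;>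
          simp only [hv, shiftSet, Set.mem_setOf_eq] <;>
          first
            | linarith
            | exact ht2
            | (show ((-2:ℝ) + 4, t) ∈ W; rw [hu'] at huW; convert huW using 2; ring)
      · refine Or.inr ⟨⟨?_, ?_⟩, Or.inl ?_⟩ <;>
          simp only [hv, shiftSet, Set.mem_setOf_eq] <;>
          first
            | linarith
            | exact ht2
            | (show ((2:ℝ) + -2, t) ∈ W; rw [hu'] at huW; convert huW using 2; ring)
      · refine Or.inr ⟨⟨?_, ?_⟩, Or.inr ?_⟩ <;>
          simp only [hv, shiftSet, Set.mem_setOf_eq] <;>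
          first
            | linarith
            | exact ht2
            | (show ((2:ℝ) + -4, t) ∈ W; rw [hu'] at huW; convert huW using 2; ring)
      · exact Or.inl (Or.inl (Or.inl (by rwa [(Subtype.ext (hu'.trans hv.symm) : u = v)] at hu)))
    · rintro (((hv | ⟨⟨h1, h2⟩, hs⟩) | ⟨⟨h1, h2⟩, hs⟩) | ⟨⟨h1, h2⟩, hs⟩)
      · exact ⟨v, hv, rfl⟩
      · obtain ⟨hx, ht0, ht2⟩ := heartY_mid v.2 h1 h2
        have hveq : (v : ℝ × ℝ) = (0, (v : ℝ × ℝ).2) := Prod.ext hx rfl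
        rcases hs with hs | hs
        · refine ⟨⟨((-2 : ℝ), (v : ℝ × ℝ).2), left_mem_heartY ht0 ht2.le⟩, ?_, ?_⟩
          · rw [← hWU]; simpa [shiftSet, hx] using hs
          · exact quotEq.mpr (Or.inr ⟨_, ht0, ht2, by simp, by rw [hveq]; simp⟩)
        · refine ⟨⟨((2 : ℝ), (v : ℝ × ℝ).2), right_mem_heartY ht0 ht2.le⟩, ?_, ?_⟩
          · rw [← hWU]; simpa [shiftSet, hx] using hs
          · exact quotEq.mpr (Or.inr ⟨_, ht0, ht2, by simp, by rw [hveq]; simp⟩)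
      · obtain ⟨hx, ht0, ht2⟩ := heartY_left v.2 h1 h2
        have hveq : (v : ℝ × ℝ) = (-2, (v : ℝ × ℝ).2) := Prod.ext hx rfl
        rcases hs with hs | hs
        · refine ⟨⟨((0 : ℝ), (v : ℝ × ℝ).2), mid_mem_heartY ht0.le ht2⟩, ?_, ?_⟩
          · rw [← hWU]; simp only [Set.mem_preimage]
            simpa [shiftSet, hx, show (-2 : ℝ) + 2 = 0 by ring] using hs
          · exact quotEq.mpr (Or.inr ⟨_, ht0, ht2, by simp, by rw [hveq]; simp⟩)
        · refine ⟨⟨((2 : ℝ), (v : ℝ × ℝ).2), right_mem_heartY ht0 ht2.le⟩, ?_, ?_⟩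
          · rw [← hWU]; simp only [Set.mem_preimage]
            simpa [shiftSet, hx, show (-2 : ℝ) + 4 = 2 by ring] using hs
          · exact quotEq.mpr (Or.inr ⟨_, ht0, ht2, by simp, by rw [hveq]; simp⟩)
      · obtain ⟨hx, ht0, ht2⟩ := heartY_right v.2 h1 h2
        have hveq : (v : ℝ × ℝ) = (2, (v : ℝ × ℝ).2) := Prod.ext hx rfl
        rcases hs with hs | hs
        · refine ⟨⟨((0 : ℝ), (v : ℝ × ℝ).2), mid_mem_heartY ht0.le ht2⟩, ?_, ?_⟩
          · rw [← hWU]; simp only [Set.mem_preimage]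
            simpa [shiftSet, hx, show (2 : ℝ) + -2 = 0 by ring] using hs
          · exact quotEq.mpr (Or.inr ⟨_, ht0, ht2, by simp, by rw [hveq]; simp⟩)
        · refine ⟨⟨((-2 : ℝ), (v : ℝ × ℝ).2), left_mem_heartY ht0 ht2.le⟩, ?_, ?_⟩
          · rw [← hWU]; simp only [Set.mem_preimage]
            simpa [shiftSet, hx, show (2 : ℝ) + -4 = -2 by ring] using hs
          · exact quotEq.mpr (Or.inr ⟨_, ht0, ht2, by simp, by rw [hveq]; simp⟩)
  rw [key]
  have habs : IsOpen {p : ℝ × ℝ | |p.1| < p.2 ∧ p.2 < 2} := by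
    apply IsOpen.inter
    · exact isOpen_lt (by fun_prop) continuous_snd
    · exact isOpen_lt continuous_snd continuous_const
  have hleft : IsOpen {p : ℝ × ℝ | p.1 + p.2 < 0 ∧ p.2 < 2} := by
    apply IsOpen.inter
    · exact isOpen_lt (continuous_fst.add continuous_snd) continuous_const
    · exact isOpen_lt continuous_snd continuous_const
  have hright : IsOpen {p : ℝ × ℝ | p.2 < p.1 ∧ p.2 < 2} := by
    apply IsOpen.inter
    · exact isOpen_lt continuous_snd continuous_fst
    · exact isOpen_lt continuous_snd continuous_const
  refine (((hU.union ?_).union ?_).union ?_) <;>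
    apply IsOpen.preimage continuous_subtype_val <;>
    apply IsOpen.inter <;>
    first
      | assumption
      | exact (isOpen_shiftSet hW _).union (isOpen_shiftSet hW _)

lemma isLocalHomeomorph_heartQuot : IsLocalHomeomorph (Quot.mk heartRel) := by
  rw [isLocalHomeomorph_iff_isOpenEmbedding_restrict]
  intro y
  refine ⟨Metric.ball y 1, Metric.ball_mem_nhds y one_pos, ?_⟩
  apply Topology.IsOpenEmbedding.of_continuous_injective_isOpenMap
  · exact continuous_quot_mk.comp continuous_subtype_val
  · rintro ⟨a, ha⟩ ⟨b, hb⟩ h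
    have hr : heartRel a b := quotEq.mp h
    have hd : dist a b < 2 := by
      calc dist a b ≤ dist a y + dist y b := dist_triangle a y b
      _ < 1 + 1 := add_lt_add (Metric.mem_ball.mp ha) (Metric.mem_ball.mp (Metric.mem_ball'.mp hb))
      _ = 2 := by norm_num
    rcases hr with rfl | ⟨t, ht0, ht2, ha3, hb3⟩
    · rfl
    have hdv : dist (a : ℝ × ℝ) (b : ℝ × ℝ) < 2 := by
      rw [← Subtype.dist_eq]; exact hd
    have hab : (a : ℝ × ℝ) = (b : ℝ × ℝ) := by
      rcases mem_triple_iff.mp ha3 with h1 | h1 | h1 <;>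
        rcases mem_triple_iff.mp hb3 with h2 | h2 | h2 <;>
        rw [h1, h2] at hdv ⊢ <;>
        first
          | rfl
          | (exfalso
             rw [Prod.dist_eq, Real.dist_eq, Real.dist_eq] at hdv
             simp only [sub_self, abs_zero] at hdv
             revert hdv
             norm_num)
    exact Subtype.ext (Subtype.ext hab)
  · intro V hV
    have : Set.restrict (Metric.ball y 1) (Quot.mk heartRel) '' V =
        Quot.mk heartRel '' (Subtype.val '' V) := by
      rw [Set.image_image]; rfl
    change IsOpen (Set.restrict (Metric.ball y 1) (Quot.mk heartRel) '' V)
    rw [this]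
    exact isOpenMap_heartQuot _ (Metric.isOpen_ball.isOpenMap_subtype_val V hV)

lemma compactSpace_heartQuot : CompactSpace (Quot heartRel) := by
  set K : Set (ℝ × ℝ) := ((fun t : ℝ => (-t, t)) '' Set.Icc 0 2) ∪
    ((fun t : ℝ => (t, t)) '' Set.Icc 0 2) ∪
    ((fun t : ℝ => ((-2 : ℝ), t)) '' Set.Icc 1 2) ∪
    ((fun t : ℝ => ((2 : ℝ), t)) '' Set.Icc 1 2) ∪
    ((fun t : ℝ => ((0 : ℝ), t)) '' Set.Icc 0 1) with hK
  have hKc : IsCompact K := by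
    refine IsCompact.union (IsCompact.union (IsCompact.union (IsCompact.union ?_ ?_) ?_) ?_) ?_ <;>
      exact isCompact_Icc.image (by fun_prop)
  have hKY : K ⊆ heartY := by
    rintro p ((((h | h) | ⟨t, ht, rfl⟩) | ⟨t, ht, rfl⟩) | ⟨t, ht, rfl⟩)
    · exact Or.inl (Or.inl (Or.inl (Or.inr h)))
    · exact Or.inl (Or.inl (Or.inr h))
    · exact Or.inl (Or.inr ⟨t, ⟨by linarith [ht.1], ht.2⟩, rfl⟩)
    · exact Or.inr ⟨t, ⟨by linarith [ht.1], ht.2⟩, rfl⟩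
    · exact Or.inl (Or.inl (Or.inl (Or.inl ⟨t, ⟨ht.1, by linarith [ht.2]⟩, rfl⟩)))
  have hs : IsCompact (Subtype.val ⁻¹' K : Set heartY) := by
    rw [Topology.IsEmbedding.subtypeVal.isCompact_iff]
    rwa [Set.image_preimage_eq_inter_range, Subtype.range_val, Set.inter_eq_left.mpr hKY]
  constructor
  have huniv : (Set.univ : Set (Quot heartRel)) = Quot.mk heartRel '' (Subtype.val ⁻¹' K) := by
    refine Set.eq_of_subset_of_subset ?_ (Set.subset_univ _)
    rintro x -
    induction x using Quot.ind with
    | mk u =>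
      rcases mem_heartY_iff.mp u.2 with ⟨h, h1, h2⟩ | ⟨h, h1, h2⟩ | ⟨h, h1, h2⟩ | ⟨h, h1, h2⟩ |
        ⟨h, h1, h2⟩
      · rcases le_or_gt (u : ℝ × ℝ).2 1 with h3 | h3
        · exact ⟨u, Or.inr ⟨(u : ℝ × ℝ).2, ⟨h1, h3⟩, Prod.ext (by rw [h]) rfl⟩, rfl⟩
        · have h0 : (0 : ℝ) < (u : ℝ × ℝ).2 := lt_trans one_pos h3
          refine ⟨⟨((2 : ℝ), (u : ℝ × ℝ).2), right_mem_heartY h0 h2.le⟩,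
            Or.inl (Or.inr ⟨(u : ℝ × ℝ).2, ⟨h3.le, h2.le⟩, rfl⟩), ?_⟩
          refine quotEq.mpr (Or.inr ⟨(u : ℝ × ℝ).2, h0, h2, by simp, ?_⟩)
          exact mem_triple_iff.mpr (Or.inl (Prod.ext (by rw [h]) rfl))
      · exact ⟨u, Or.inl (Or.inl (Or.inl (Or.inl ⟨(u : ℝ × ℝ).2, ⟨h1, h2⟩,
          Prod.ext (by rw [h]) rfl⟩))), rfl⟩
      · exact ⟨u, Or.inl (Or.inl (Or.inl (Or.inr ⟨(u : ℝ × ℝ).2, ⟨h1, h2⟩,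
          Prod.ext (by rw [h]) rfl⟩))), rfl⟩
      · rcases le_or_gt 1 (u : ℝ × ℝ).2 with h3 | h3
        · exact ⟨u, Or.inl (Or.inl (Or.inr ⟨(u : ℝ × ℝ).2, ⟨h3, h2⟩,
            Prod.ext (by rw [h]) rfl⟩)), rfl⟩
        · have h2' : (u : ℝ × ℝ).2 < 2 := lt_trans h3 one_lt_two
          refine ⟨⟨((0 : ℝ), (u : ℝ × ℝ).2), mid_mem_heartY h1.le h2'⟩,
            Or.inr ⟨(u : ℝ × ℝ).2, ⟨h1.le, h3.le⟩, rfl⟩, ?_⟩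
          refine quotEq.mpr (Or.inr ⟨(u : ℝ × ℝ).2, h1, h2', by simp, ?_⟩)
          exact mem_triple_iff.mpr (Or.inr (Or.inl (Prod.ext (by rw [h]) rfl)))
      · rcases le_or_gt 1 (u : ℝ × ℝ).2 with h3 | h3
        · exact ⟨u, Or.inl (Or.inr ⟨(u : ℝ × ℝ).2, ⟨h3, h2⟩,
            Prod.ext (by rw [h]) rfl⟩), rfl⟩
        · have h2' : (u : ℝ × ℝ).2 < 2 := lt_trans h3 one_lt_two
          refine ⟨⟨((0 : ℝ), (u : ℝ × ℝ).2), mid_mem_heartY h1.le h2'⟩,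
            Or.inr ⟨(u : ℝ × ℝ).2, ⟨h1.le, h3.le⟩, rfl⟩, ?_⟩
          refine quotEq.mpr (Or.inr ⟨(u : ℝ × ℝ).2, h1, h2', by simp, ?_⟩)
          exact mem_triple_iff.mpr (Or.inr (Or.inr (Prod.ext (by rw [h]) rfl)))
  rw [huniv]
  exact hs.image continuous_quot_mk

def heartF (p : ℝ × ℝ) : ℝ × ℝ := (p.1 * (4 - p.1 ^ 2) * (2 - p.2), p.2)

lemma heartF_continuous : Continuous heartF := by unfold heartF; fun_prop

lemma cube_pos {y : ℝ} (h0 : 0 < y) (h2 : y < 2) : 0 < y * (4 - y ^ 2) * (2 - y) :=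
  mul_pos (mul_pos h0 (by nlinarith)) (by linarith)

lemma heartF_const (u v : heartY) (h : heartRel u v) : heartF ↑u = heartF ↑v := by
  rcases h with rfl | ⟨t, ht0, ht2, hu, hv⟩
  · rfl
  · rcases mem_triple_iff.mp hu with h1 | h1 | h1 <;> rcases mem_triple_iff.mp hv with h2 | h2 |
      h2 <;> rw [h1, h2] <;> unfold heartF <;> norm_num

lemma heartF_inj {u v : heartY} (h : heartF ↑u = heartF ↑v) :
    heartRel u v ∨ ((u : ℝ × ℝ) = (-2, 2) ∧ (v : ℝ × ℝ) = (2, 2)) ∨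
      ((u : ℝ × ℝ) = (2, 2) ∧ (v : ℝ × ℝ) = (-2, 2)) := by
  obtain ⟨⟨a, s⟩, hu⟩ := u
  obtain ⟨⟨b, t⟩, hv⟩ := v
  obtain ⟨heq, hy⟩ := Prod.ext_iff.mp h
  simp only [heartF] at heq hy
  subst hy
  rcases mem_heartY_iff.mp hu with ⟨ha, h1, h2⟩ | ⟨ha, h1, h2⟩ | ⟨ha, h1, h2⟩ | ⟨ha, h1, h2⟩ |
      ⟨ha, h1, h2⟩ <;>
    rcases mem_heartY_iff.mp hv with ⟨hb, h1', h2'⟩ | ⟨hb, h1', h2'⟩ | ⟨hb, h1', h2'⟩ |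
      ⟨hb, h1', h2'⟩ | ⟨hb, h1', h2'⟩ <;>
    simp only at ha hb h1 h2 h1' h2' <;> subst a <;> subst b
  -- M M
  · exact Or.inl (Or.inl (Subtype.ext rfl))
  -- M D-
  · have hs : s = 0 := by
      by_contra hc
      have h0 : 0 < s := lt_of_le_of_ne h1' (Ne.symm hc)
      nlinarith [cube_pos h0 h2]
    subst hs
    exact Or.inl (Or.inl (Subtype.ext (by norm_num)))
  -- M D+
  · have hs : s = 0 := by
      by_contra hc
      have h0 : 0 < s := lt_of_le_of_ne h1' (Ne.symm hc)
      nlinarith [cube_pos h0 h2]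
    subst hs
    exact Or.inl (Or.inl (Subtype.ext (by norm_num)))
  -- M L
  · exact Or.inl (Or.inr ⟨s, h1', h2, by simp, by simp⟩)
  -- M R
  · exact Or.inl (Or.inr ⟨s, h1', h2, by simp, by simp⟩)
  -- D- M
  · have hs : s = 0 := by
      by_contra hc
      have h0 : 0 < s := lt_of_le_of_ne h1 (Ne.symm hc)
      nlinarith [cube_pos h0 h2']
    subst hs
    exact Or.inl (Or.inl (Subtype.ext (by norm_num)))
  -- D- D-
  · exact Or.inl (Or.inl (Subtype.ext rfl))
  -- D- D+
  · have hs : s = 0 ∨ s = 2 := by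
      by_contra hc
      push_neg at hc
      have h0 : 0 < s := lt_of_le_of_ne h1 (Ne.symm hc.1)
      have h2'' : s < 2 := lt_of_le_of_ne h2 hc.2
      nlinarith [cube_pos h0 h2'']
    rcases hs with rfl | rfl
    · exact Or.inl (Or.inl (Subtype.ext (by norm_num)))
    · exact Or.inr (Or.inl ⟨by norm_num, by norm_num⟩)
  -- D- L
  · have hs : s = 2 := by
      by_contra hc
      have h2'' : s < 2 := lt_of_le_of_ne h2 hc
      nlinarith [cube_pos h1' h2'']
    subst hs
    exact Or.inl (Or.inl (Subtype.ext (by norm_num)))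
  -- D- R
  · have hs : s = 2 := by
      by_contra hc
      have h2'' : s < 2 := lt_of_le_of_ne h2 hc
      nlinarith [cube_pos h1' h2'']
    subst hs
    exact Or.inr (Or.inl ⟨by norm_num, rfl⟩)
  -- D+ M
  · have hs : s = 0 := by
      by_contra hc
      have h0 : 0 < s := lt_of_le_of_ne h1 (Ne.symm hc)
      nlinarith [cube_pos h0 h2']
    subst hs
    exact Or.inl (Or.inl (Subtype.ext (by norm_num)))
  -- D+ D-
  · have hs : s = 0 ∨ s = 2 := by
      by_contra hc
      push_neg at hc
      have h0 : 0 < s := lt_of_le_of_ne h1 (Ne.symm hc.1)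
      have h2'' : s < 2 := lt_of_le_of_ne h2 hc.2
      nlinarith [cube_pos h0 h2'']
    rcases hs with rfl | rfl
    · exact Or.inl (Or.inl (Subtype.ext (by norm_num)))
    · exact Or.inr (Or.inr ⟨by norm_num, by norm_num⟩)
  -- D+ D+
  · exact Or.inl (Or.inl (Subtype.ext rfl))
  -- D+ L
  · have hs : s = 2 := by
      by_contra hc
      have h2'' : s < 2 := lt_of_le_of_ne h2 hc
      nlinarith [cube_pos h1' h2'']
    subst hs
    exact Or.inr (Or.inr ⟨rfl, rfl⟩)
  -- D+ R
  · have hs : s = 2 := by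
      by_contra hc
      have h2'' : s < 2 := lt_of_le_of_ne h2 hc
      nlinarith [cube_pos h1' h2'']
    subst hs
    exact Or.inl (Or.inl (Subtype.ext rfl))
  -- L M
  · exact Or.inl (Or.inr ⟨s, h1, h2', by simp, by simp⟩)
  -- L D-
  · have hs : s = 2 := by
      by_contra hc
      have h2'' : s < 2 := lt_of_le_of_ne h2' hc
      nlinarith [cube_pos h1 h2'']
    subst hs
    exact Or.inl (Or.inl (Subtype.ext (by norm_num)))
  -- L D+
  · have hs : s = 2 := by
      by_contra hc
      have h2'' : s < 2 := lt_of_le_of_ne h2' hc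
      nlinarith [cube_pos h1 h2'']
    subst hs
    exact Or.inr (Or.inl ⟨rfl, rfl⟩)
  -- L L
  · exact Or.inl (Or.inl (Subtype.ext rfl))
  -- L R
  · rcases lt_or_eq_of_le h2 with h2'' | rfl
    · exact Or.inl (Or.inr ⟨s, h1, h2'', by simp, by simp⟩)
    · exact Or.inr (Or.inl ⟨rfl, rfl⟩)
  -- R M
  · exact Or.inl (Or.inr ⟨s, h1, h2', by simp, by simp⟩)
  -- R D-
  · have hs : s = 2 := by
      by_contra hc
      have h2'' : s < 2 := lt_of_le_of_ne h2' hc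
      nlinarith [cube_pos h1 h2'']
    subst hs
    exact Or.inr (Or.inr ⟨rfl, by norm_num⟩)
  -- R D+
  · have hs : s = 2 := by
      by_contra hc
      have h2'' : s < 2 := lt_of_le_of_ne h2' hc
      nlinarith [cube_pos h1 h2'']
    subst hs
    exact Or.inl (Or.inl (Subtype.ext rfl))
  -- R L
  · rcases lt_or_eq_of_le h2 with h2'' | rfl
    · exact Or.inl (Or.inr ⟨s, h1, h2'', by simp, by simp⟩)
    · exact Or.inr (Or.inr ⟨rfl, rfl⟩)
  -- R R
  · exact Or.inl (Or.inl (Subtype.ext rfl))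

def heartG : Quot heartRel → ℝ × ℝ := Quot.lift (fun y => heartF ↑y) heartF_const

lemma heartG_continuous : Continuous heartG :=
  continuous_quot_lift _ (heartF_continuous.comp continuous_subtype_val)

def tipR : heartY := ⟨((2 : ℝ), 2), right_mem_heartY two_pos le_rfl⟩
def tipL : heartY := ⟨((-2 : ℝ), 2), left_mem_heartY two_pos le_rfl⟩

lemma class_tip {c : ℝ} (hc : c = 2 ∨ c = -2) {w : heartY} (hcY : ((c : ℝ), (2:ℝ)) ∈ heartY)
    (h : heartRel w ⟨(c, 2), hcY⟩) : w = ⟨(c, 2), hcY⟩ := by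
  rcases h with h | ⟨t, ht0, ht2, h3, h4⟩
  · exact h
  · exfalso
    have := triple_snd h4
    simp only at this
    rw [this] at ht2
    exact absurd ht2 (lt_irrefl t)

lemma isOpen_compl_tip {c : ℝ} (hc : c = 2 ∨ c = -2) (hcY : ((c : ℝ), (2:ℝ)) ∈ heartY) :
    IsOpen {x : Quot heartRel | x ≠ Quot.mk heartRel ⟨(c, 2), hcY⟩} := by
  rw [← isQuotientMap_quot_mk.isOpen_preimage]
  have : Quot.mk heartRel ⁻¹' {x : Quot heartRel | x ≠ Quot.mk heartRel ⟨(c, 2), hcY⟩} =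
      {(⟨(c, 2), hcY⟩ : heartY)}ᶜ := by
    ext w
    simp only [Set.mem_preimage, Set.mem_setOf_eq, Set.mem_compl_iff, Set.mem_singleton_iff]
    constructor
    · intro h h'; exact h (by rw [h'])
    · intro h h'; exact h (class_tip hc hcY (quotEq.mp h'))
  rw [this]
  exact isOpen_compl_singleton

lemma t2_compl_tip {c : ℝ} (hc : c = 2 ∨ c = -2) (hcY : ((c : ℝ), (2:ℝ)) ∈ heartY) :
    T2Space ↥{x : Quot heartRel | x ≠ Quot.mk heartRel ⟨(c, 2), hcY⟩} := by
  apply T2Space.of_injective_continuous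
    (f := Set.restrict {x : Quot heartRel | x ≠ Quot.mk heartRel ⟨(c, 2), hcY⟩} heartG)
  · rintro ⟨x, hx⟩ ⟨y, hy⟩ hG
    obtain ⟨u, rfl⟩ := Quot.exists_rep x
    obtain ⟨v, rfl⟩ := Quot.exists_rep y
    have hF : heartF ↑u = heartF ↑v := hG
    rcases heartF_inj hF with h | ⟨h1, h2⟩ | ⟨h1, h2⟩
    · exact Subtype.ext (Quot.sound h)
    · exfalso
      rcases hc with rfl | rfl
      · exact hy (congrArg (Quot.mk heartRel) (Subtype.ext h2))
      · exact hx (congrArg (Quot.mk heartRel) (Subtype.ext h1))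
    · exfalso
      rcases hc with rfl | rfl
      · exact hx (congrArg (Quot.mk heartRel) (Subtype.ext h1))
      · exact hy (congrArg (Quot.mk heartRel) (Subtype.ext h2))
  · exact heartG_continuous.comp continuous_subtype_val

/-- `r` is an equivalence relation on `Y`, the quotient map
`q : Y → X = Y/r` (the broken heart, with the quotient topology) is a surjective local
homeomorphism, `X` is compact, and `X` is locally Hausdorff: every point of `X` has an
open neighborhood which is Hausdorff in the subspace topology. -/
theorem stmt_18 :
    Equivalence heartRel ∧
    Function.Surjective (Quot.mk heartRel) ∧
    IsLocalHomeomorph (Quot.mk heartRel) ∧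
    CompactSpace (Quot heartRel) ∧
    (∀ x : Quot heartRel, ∃ O : Set (Quot heartRel), IsOpen O ∧ x ∈ O ∧ T2Space ↥O) := by
  refine ⟨heartRel_equiv, Quot.exists_rep, isLocalHomeomorph_heartQuot, compactSpace_heartQuot, ?_⟩
  intro x
  by_cases hx : x = Quot.mk heartRel tipR
  · refine ⟨{y : Quot heartRel | y ≠ Quot.mk heartRel tipL},
      isOpen_compl_tip (Or.inr rfl) tipL.2, ?_, t2_compl_tip (Or.inr rfl) tipL.2⟩
    subst hx
    simp only [Set.mem_setOf_eq, ne_eq]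
    intro h
    rcases quotEq.mp h with h' | ⟨t, ht0, ht2, h3, h4⟩
    · have : ((2 : ℝ), (2 : ℝ)) = ((-2 : ℝ), (2 : ℝ)) := congrArg Subtype.val h'
      norm_num at this
    · have := triple_snd h3
      simp only [tipR] at this
      rw [this] at ht2
      exact absurd ht2 (lt_irrefl t)
  · exact ⟨{y : Quot heartRel | y ≠ Quot.mk heartRel tipR},
      isOpen_compl_tip (Or.inl rfl) tipR.2, hx, t2_compl_tip (Or.inl rfl) tipR.2⟩
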